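/- For an irreducible continuous-time Markov jump process on a finite state space with transition rates k(x,y) and unique stationary distribution ρ, and an antisymmetric function q(x,y) = -q(y,x) on pairs, the stationary dissipated power ⟨P⟩ = Σ_x ρ(x) Σ_y k(x,y) q(x,y) is nonnegative whenever q(x,y) = log(k(x,y)/k(y,x)). -/
import Mathlib


open Finset

/-- Irreducibility of the rates: any two states are connected by a path of positive rates. -/
def IrreducibleRates {V : Type*} [Fintype V] (k : V → V → ℝ) : Prop :=
  ∀ x y : V, ∃ (n : ℕ) (c : ℕ → V), c 0 = x ∧ c n = y ∧ ∀ i < n, 0 < k (c i) (c (i + 1))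

/-- for an irreducible Markov jump process with stationary distribution ρ and
antisymmetric `q(x,y) = log (k(x,y)/k(y,x))`, the stationary dissipated power is nonnegative. -/
theorem stmt0 {V : Type*} [Fintype V] [Nonempty V]
    (k : V → V → ℝ) (q : V → V → ℝ) (ρ : V → ℝ)
    (hk : ∀ x y, 0 ≤ k x y)
    (hksym : ∀ x y, 0 < k x y ↔ 0 < k y x)
    (hirr : IrreducibleRates k)
    (hρnn : ∀ x, 0 ≤ ρ x) (hρ1 : ∑ x, ρ x = 1)
    (hstat : ∀ x, ∑ y, k x y * ρ x = ∑ y, k y x * ρ y)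
    (hqa : ∀ x y, q x y = - q y x)
    (hq : ∀ x y, 0 < k x y → q x y = Real.log (k x y / k y x)) :
    0 ≤ ∑ x, ρ x * ∑ y, k x y * q x y := by
  classical
  -- Step 1: ρ is everywhere positive.
  have hprop : ∀ x y, 0 < ρ x → 0 < k x y → 0 < ρ y := by
    intro x y hx hkxy
    rcases lt_or_eq_of_le (hρnn y) with h | h
    · exact h
    · exfalso
      have h0 : ρ y = 0 := h.symm
      have hL : ∑ z, k y z * ρ y = 0 := by simp [h0]
      have hR : 0 < ∑ z, k z y * ρ z := by
        apply Finset.sum_pos'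
        · intro z _; exact mul_nonneg (hk z y) (hρnn z)
        · exact ⟨x, Finset.mem_univ x, mul_pos hkxy hx⟩
      rw [hstat y] at hL
      linarith
  obtain ⟨x0, hx0⟩ : ∃ x0, 0 < ρ x0 := by
    by_contra h
    push_neg at h
    have : ∀ x, ρ x = 0 := fun x => le_antisymm (h x) (hρnn x)
    simp [this] at hρ1
  have hρpos : ∀ y, 0 < ρ y := by
    intro y
    obtain ⟨n, c, hc0, hcn, hstep⟩ := hirr x0 y
    have : ∀ i ≤ n, 0 < ρ (c i) := by
      intro i
      induction i with
      | zero => intro _; rw [hc0]; exact hx0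
      | succ m ih =>
        intro hm
        exact hprop (c m) (c (m + 1)) (ih (Nat.le_of_succ_le hm)) (hstep m hm)
    rw [← hcn]; exact this n le_rfl
  -- Step 2: rewrite the sum.
  have hrw : ∑ x, ρ x * ∑ y, k x y * q x y = ∑ x, ∑ y, ρ x * k x y * q x y := by
    apply Finset.sum_congr rfl
    intro x _
    rw [Finset.mul_sum]
    apply Finset.sum_congr rfl
    intro y _
    ring
  rw [hrw]
  -- Step 3: replace q with log(ρx kxy) - log(ρy kyx), using stationarity.
  have key : ∑ x, ∑ y, ρ x * k x y * q x y =
      ∑ x, ∑ y, ρ x * k x y * (Real.log (ρ x * k x y) - Real.log (ρ y * k y x)) := by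
    have hterm : ∀ x y, ρ x * k x y * q x y =
        ρ x * k x y * (Real.log (ρ x * k x y) - Real.log (ρ y * k y x))
        - ρ x * k x y * (Real.log (ρ x) - Real.log (ρ y)) := by
      intro x y
      rcases lt_or_eq_of_le (hk x y) with hkxy | hkxy
      · have hkyx : 0 < k y x := (hksym x y).mp hkxy
        rw [hq x y hkxy, Real.log_div (ne_of_gt hkxy) (ne_of_gt hkyx),
          Real.log_mul (ne_of_gt (hρpos x)) (ne_of_gt hkxy),
          Real.log_mul (ne_of_gt (hρpos y)) (ne_of_gt hkyx)]
        ring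
      · simp [← hkxy]
    have hzero : ∑ x, ∑ y, ρ x * k x y * (Real.log (ρ x) - Real.log (ρ y)) = 0 := by
      have h1 : ∑ x, ∑ y, ρ x * k x y * Real.log (ρ x)
          = ∑ x, Real.log (ρ x) * ∑ y, k x y * ρ x := by
        apply Finset.sum_congr rfl
        intro x _
        rw [Finset.mul_sum]
        apply Finset.sum_congr rfl; intro y _; ring
      have h2 : ∑ x, ∑ y, ρ x * k x y * Real.log (ρ y)
          = ∑ y, Real.log (ρ y) * ∑ x, k y x * ρ y := by
        rw [Finset.sum_comm]
        apply Finset.sum_congr rfl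
        intro y _
        rw [hstat y, Finset.mul_sum]
        apply Finset.sum_congr rfl; intro x _; ring
      have : ∑ x, ∑ y, ρ x * k x y * (Real.log (ρ x) - Real.log (ρ y))
          = (∑ x, ∑ y, ρ x * k x y * Real.log (ρ x))
            - ∑ x, ∑ y, ρ x * k x y * Real.log (ρ y) := by
        rw [← Finset.sum_sub_distrib]
        apply Finset.sum_congr rfl
        intro x _
        rw [← Finset.sum_sub_distrib]
        apply Finset.sum_congr rfl; intro y _; ring
      rw [this, h1, h2]
      simp
    calc ∑ x, ∑ y, ρ x * k x y * q x y
        = ∑ x, ∑ y, (ρ x * k x y * (Real.log (ρ x * k x y) - Real.log (ρ y * k y x))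
            - ρ x * k x y * (Real.log (ρ x) - Real.log (ρ y))) := by
          apply Finset.sum_congr rfl; intro x _
          apply Finset.sum_congr rfl; intro y _
          exact hterm x y
      _ = (∑ x, ∑ y, ρ x * k x y * (Real.log (ρ x * k x y) - Real.log (ρ y * k y x)))
            - ∑ x, ∑ y, ρ x * k x y * (Real.log (ρ x) - Real.log (ρ y)) := by
          rw [← Finset.sum_sub_distrib]
          apply Finset.sum_congr rfl; intro x _
          rw [← Finset.sum_sub_distrib]
      _ = ∑ x, ∑ y, ρ x * k x y * (Real.log (ρ x * k x y) - Real.log (ρ y * k y x)) := by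
          rw [hzero]; ring
  rw [key]
  -- Step 4: termwise bound a log(a/b) ≥ a - b, then the sum of differences is zero.
  have hbound : ∀ x y, ρ x * k x y - ρ y * k y x ≤
      ρ x * k x y * (Real.log (ρ x * k x y) - Real.log (ρ y * k y x)) := by
    intro x y
    rcases lt_or_eq_of_le (hk x y) with hkxy | hkxy
    · have hkyx : 0 < k y x := (hksym x y).mp hkxy
      set a := ρ x * k x y with ha
      set b := ρ y * k y x with hb
      have hapos : 0 < a := mul_pos (hρpos x) hkxy
      have hbpos : 0 < b := mul_pos (hρpos y) hkyx
      have hlog : Real.log (b / a) ≤ b / a - 1 :=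
        Real.log_le_sub_one_of_pos (div_pos hbpos hapos)
      rw [Real.log_div (ne_of_gt hbpos) (ne_of_gt hapos)] at hlog
      have := mul_le_mul_of_nonneg_left hlog (le_of_lt hapos)
      have hba : a * (b / a) = b := by field_simp
      nlinarith [hapos, hbpos]
    · have hkyx : k y x = 0 := by
        by_contra h
        have : 0 < k y x := lt_of_le_of_ne (hk y x) (Ne.symm h)
        have := (hksym y x).mp this
        rw [← hkxy] at this; exact lt_irrefl 0 this
      simp [← hkxy, hkyx]
  have hdiff : ∑ x, ∑ y, (ρ x * k x y - ρ y * k y x) = 0 := by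
    have : ∑ x, ∑ y, (ρ x * k x y - ρ y * k y x)
        = (∑ x, ∑ y, ρ x * k x y) - ∑ x, ∑ y, ρ y * k y x := by
      rw [← Finset.sum_sub_distrib]
      apply Finset.sum_congr rfl; intro x _
      rw [← Finset.sum_sub_distrib]
    rw [this, Finset.sum_comm (f := fun x y => ρ y * k y x)]
    simp
  calc (0:ℝ) = ∑ x, ∑ y, (ρ x * k x y - ρ y * k y x) := hdiff.symm
    _ ≤ ∑ x, ∑ y, ρ x * k x y * (Real.log (ρ x * k x y) - Real.log (ρ y * k y x)) := by
        apply Finset.sum_le_sum; intro x _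
        apply Finset.sum_le_sum; intro y _
        exact hbound x y
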